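/- arXiv:1303.3872 — 9 statements merged into one kernel-verified Lean document; each statement's English description precedes it below -/
import Mathlib

section
/- Let α, β, γ, λ be real numbers satisfying the system: x₁(β−γ) = x₂(γ−α) = x₃(α−β) = 0 for some reals x₁,x₂,x₃; α²(β+γ) + (β−γ)²(β+γ) − 2α³ + 2λ = 0; β²(α+γ) + (α−γ)²(α+γ) − 2β³ + 2λ = 0; γ²(α+β) + (α−β)²(α+β) − 2γ³ + 2λ = 0. If moreover α = β and x₁ = x₂ = 0 and β ≠ γ, then γ = 0. -/
theorem stmt1 (α β γ lam x₁ x₂ x₃ : ℝ)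
    (h1 : x₁ * (β - γ) = 0) (h2 : x₂ * (γ - α) = 0) (h3 : x₃ * (α - β) = 0)
    (h4 : α^2 * (β + γ) + (β - γ)^2 * (β + γ) - 2 * α^3 + 2 * lam = 0)
    (h5 : β^2 * (α + γ) + (α - γ)^2 * (α + γ) - 2 * β^3 + 2 * lam = 0)
    (h6 : γ^2 * (α + β) + (α - β)^2 * (α + β) - 2 * γ^3 + 2 * lam = 0)
    (hab : α = β) (hx1 : x₁ = 0) (hx2 : x₂ = 0) (hbg : β ≠ γ) :
    γ = 0 := by
  subst hab
  have key : 3 * γ^2 * (γ - α) = 0 := by linear_combination h4 - h6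
  have h := sub_ne_zero.mpr hbg
  have : γ^2 = 0 := by
    rcases mul_eq_zero.mp key with h' | h'
    · rcases mul_eq_zero.mp h' with h'' | h''
      · norm_num at h''
      · exact h''
    · exact absurd h' (sub_ne_zero.mpr (Ne.symm hbg))
  exact pow_eq_zero_iff (by norm_num) |>.mp this
end

section
/- Let α, β, γ, λ, x₁, x₂, x₃ be real numbers with β ≠ 0 satisfying: β x₂ + (α−γ) x₃ = 0; β x₃ + (γ−α) x₂ = 0; β(α² + 4αγ + 4β² − 8γ²) = 0; α³ − α²γ + 4β²γ − λ = 0; α³ − α²γ + 4β²γ + 2λ + 4β x₁ = 0; α³ − α²γ + 4β²γ + 2λ − 4β x₁ = 0. Then x₁ = x₂ = x₃ = 0. -/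
theorem stmt2 (α β γ lam x₁ x₂ x₃ : ℝ) (hβ : β ≠ 0)
    (h1 : β * x₂ + (α - γ) * x₃ = 0)
    (h2 : β * x₃ + (γ - α) * x₂ = 0)
    (h3 : β * (α^2 + 4 * α * γ + 4 * β^2 - 8 * γ^2) = 0)
    (h4 : α^3 - α^2 * γ + 4 * β^2 * γ - lam = 0)
    (h5 : α^3 - α^2 * γ + 4 * β^2 * γ + 2 * lam + 4 * β * x₁ = 0)
    (h6 : α^3 - α^2 * γ + 4 * β^2 * γ + 2 * lam - 4 * β * x₁ = 0) :
    x₁ = 0 ∧ x₂ = 0 ∧ x₃ = 0 := by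
  have hx1 : x₁ = 0 := by
    have h8 : 8 * β * x₁ = 0 := by linarith
    have := mul_ne_zero (by norm_num : (8:ℝ) ≠ 0) hβ
    rcases mul_eq_zero.mp h8 with h | h
    · exact absurd h this
    · exact h
  have key : (β^2 + (α - γ)^2) * x₂ = 0 := by linear_combination β * h1 - (α - γ) * h2
  have hpos : β^2 + (α - γ)^2 > 0 := by positivity
  have hx2 : x₂ = 0 := by
    rcases mul_eq_zero.mp key with h | h
    · exact absurd h (ne_of_gt hpos)
    · exact h
  have hx3 : x₃ = 0 := by
    have : β * x₃ = 0 := by rw [hx2] at h2; linarith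
    rcases mul_eq_zero.mp this with h | h
    · exact absurd h hβ
    · exact h
  exact ⟨hx1, hx2, hx3⟩
end

section
/- Let α, β, λ, x₁, x₂, x₃ be real numbers satisfying: x₂ + x₃(2α − 2β − 1) = 0; x₃ − x₂(2α − 2β + 1) = 0; α² − 8β² + 4αβ + 4x₁ = 0; α²(α−β) − λ = 0; 2α³ − 8β² + 4αβ − α²(2β−1) + 4x₁ + 4λ = 0; 2α³ + 8β² − 4αβ − α²(2β+1) − 4x₁ + 4λ = 0. Then λ = 0, and either (α = β, x₂ = x₃, x₁ = (3/4)β²) or (α = 0, x₂ = x₃ = 0, x₁ = 2β²). -/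
theorem stmt4 (α β lam x₁ x₂ x₃ : ℝ)
    (h1 : x₂ + x₃ * (2 * α - 2 * β - 1) = 0)
    (h2 : x₃ - x₂ * (2 * α - 2 * β + 1) = 0)
    (h3 : α^2 - 8 * β^2 + 4 * α * β + 4 * x₁ = 0)
    (h4 : α^2 * (α - β) - lam = 0)
    (h5 : 2 * α^3 - 8 * β^2 + 4 * α * β - α^2 * (2 * β - 1) + 4 * x₁ + 4 * lam = 0)
    (h6 : 2 * α^3 + 8 * β^2 - 4 * α * β - α^2 * (2 * β + 1) - 4 * x₁ + 4 * lam = 0) :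
    lam = 0 ∧
      ((α = β ∧ x₂ = x₃ ∧ x₁ = (3 / 4) * β^2) ∨
       (α = 0 ∧ x₂ = 0 ∧ x₃ = 0 ∧ x₁ = 2 * β^2)) := by
  have hlam : lam = 0 := by linear_combination (h5 - h3 - 2 * h4) / 6
  refine ⟨hlam, ?_⟩
  have hαβ : α ^ 2 * (α - β) = 0 := by linear_combination h4 + hlam
  rcases mul_eq_zero.mp hαβ with h | h
  · have hα : α = 0 := by
      have := sq_eq_zero_iff.mp h
      exact this
    by_cases hβ : β = 0
    · left
      subst hα hβ
      refine ⟨rfl, by linarith, by nlinarith⟩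
    · right
      subst hα
      have hx2 : x₂ * (4 * β ^ 2) = 0 := by linear_combination h1 + (2 * β + 1) * h2
      have hx2' : x₂ = 0 := by
        rcases mul_eq_zero.mp hx2 with h' | h'
        · exact h'
        · exact absurd (by nlinarith : β = 0) hβ
      have hx3 : x₃ = 0 := by
        rw [hx2'] at h2; linarith [h2]
      refine ⟨rfl, hx2', hx3, by linarith⟩
  · left
    have hα : α = β := by linarith
    subst hα
    refine ⟨rfl, by linarith, by nlinarith⟩
end

section
/- Let α, λ, x₁, x₂, x₃ be real numbers satisfying: 2x₁ + 3α² = 0; √2·x₂ + √2·x₃ + λ = 0; 3√2·α − x₂ + x₃ = 0; 3α + √2·x₃ − λ = 0; 3α − √2·x₂ + λ = 0. Then λ = 0, x₁ = −3α²/2, x₂ = 3α/√2, and x₃ = −3α/√2. In particular, if α = 0 then x₁ = x₂ = x₃ = 0. -/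
theorem stmt5 (α lam x₁ x₂ x₃ : ℝ)
    (h1 : 2 * x₁ + 3 * α^2 = 0)
    (h2 : Real.sqrt 2 * x₂ + Real.sqrt 2 * x₃ + lam = 0)
    (h3 : 3 * Real.sqrt 2 * α - x₂ + x₃ = 0)
    (h4 : 3 * α + Real.sqrt 2 * x₃ - lam = 0)
    (h5 : 3 * α - Real.sqrt 2 * x₂ + lam = 0) :
    lam = 0 ∧ x₁ = -(3 * α^2) / 2 ∧ x₂ = 3 * α / Real.sqrt 2 ∧ x₃ = -(3 * α) / Real.sqrt 2
      ∧ (α = 0 → x₁ = 0 ∧ x₂ = 0 ∧ x₃ = 0) := by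
  have hs : Real.sqrt 2 ^ 2 = 2 := Real.sq_sqrt (by norm_num)
  have hsne : Real.sqrt 2 ≠ 0 := by positivity
  have hlam : lam = 0 := by linarith [h2, h4, h5]
  have hx1 : x₁ = -(3 * α^2) / 2 := by linarith
  have hx2 : x₂ = 3 * α / Real.sqrt 2 := by
    field_simp
    nlinarith [h2, h3, hs, hlam]
  have hx3 : x₃ = -(3 * α) / Real.sqrt 2 := by
    field_simp
    nlinarith [h2, h3, hs, hlam]
  refine ⟨hlam, hx1, hx2, hx3, fun ha => ?_⟩
  subst ha
  simp [hx1, hx2, hx3]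
end

section
/- Let α, β, γ, δ be real numbers with αγ − βδ = 0, α + δ ≠ 0, α ≠ 0, δ ≠ 0, α ≠ δ, β ≠ 0, and α² − β² ≠ 0, and suppose γ = βδ/α. If moreover α²β² − 3β²δ² + 2αβ²δ + 4α⁴ = 0 and 3α²β² − β²δ² − 2αβ²δ − 4α²δ² = 0, then (α² + β²)(α² − δ²) = 0, a contradiction; hence no such α, β, γ, δ exist. -/
theorem stmt6 (α β γ δ : ℝ)
    (hcomp : α * γ - β * δ = 0) (hsum : α + δ ≠ 0)
    (hα : α ≠ 0) (hδ : δ ≠ 0) (hαδ : α ≠ δ) (hβ : β ≠ 0)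
    (hab : α^2 - β^2 ≠ 0) (hγ : γ = β * δ / α)
    (e1 : α^2 * β^2 - 3 * β^2 * δ^2 + 2 * α * β^2 * δ + 4 * α^4 = 0)
    (e2 : 3 * α^2 * β^2 - β^2 * δ^2 - 2 * α * β^2 * δ - 4 * α^2 * δ^2 = 0) :
    False := by
  have key : (α^2 + β^2) * (α^2 - δ^2) = 0 := by nlinarith [e1, e2]
  have hpos : α^2 + β^2 > 0 := by positivity
  have h2 : α^2 - δ^2 = 0 := by
    rcases mul_eq_zero.mp key with h | h
    · linarith
    · exact h
  have : (α - δ) * (α + δ) = 0 := by ring_nf; nlinarith [h2]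
  rcases mul_eq_zero.mp this with h | h
  · exact hαδ (by linarith)
  · exact hsum h
end

section
/- Let α, β, δ be real numbers with α ≠ 0, δ ≠ 0, α + δ ≠ 0, α ≠ δ, β ≠ 0, satisfying 4α⁴ − α²β² − 2αβ²δ + 3β²δ² = 0 and α²(3β² + 4δ²) − 2αβ²δ − β²δ² = 0. Then no such α, β, δ exist. -/
theorem stmt7 (α β δ : ℝ)
    (hα : α ≠ 0) (hδ : δ ≠ 0) (hsum : α + δ ≠ 0) (hαδ : α ≠ δ) (hβ : β ≠ 0)
    (e1 : 4 * α^4 - α^2 * β^2 - 2 * α * β^2 * δ + 3 * β^2 * δ^2 = 0)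
    (e2 : α^2 * (3 * β^2 + 4 * δ^2) - 2 * α * β^2 * δ - β^2 * δ^2 = 0) :
    False := by
  have key : (α^2 - β^2) * (α^2 - δ^2) = 0 := by linear_combination (e1 - e2) / 4
  rcases mul_eq_zero.mp key with h | h
  · have hb : β^2 = α^2 := by linarith
    have h2 : α^2 * (3*α^2 - 2*α*δ + 3*δ^2) = 0 := by
      rw [hb] at e2; linarith [e2]
    have hpos : 3*α^2 - 2*α*δ + 3*δ^2 > 0 := by nlinarith [sq_nonneg (α - δ), sq_nonneg α, sq_nonneg δ, sq_pos_of_ne_zero hα]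
    have := mul_eq_zero.mp h2
    rcases this with h3 | h3
    · exact hα (pow_eq_zero_iff (by norm_num) |>.mp h3)
    · linarith
  · have : (α - δ) * (α + δ) = 0 := by linear_combination h
    rcases mul_eq_zero.mp this with h3 | h3
    · exact hαδ (by linarith)
    · exact hsum h3
end

section
/- Let α, β, γ, δ, λ, x₁, x₂, x₃ be real numbers with αγ = 0 and α + δ ≠ 0, satisfying: γx₃ = 0; αx₁ + γx₂ + βx₃ = 0; 2αx₃ + γ³ − λ = 0; γ³ − 2δx₃ + 2λ = 0; βγ² + 4βx₁ + 4δx₂ = 0. Then γ = 0. -/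
theorem stmt8 (α β γ δ lam x₁ x₂ x₃ : ℝ)
    (hag : α * γ = 0) (hsum : α + δ ≠ 0)
    (h1 : γ * x₃ = 0)
    (h2 : α * x₁ + γ * x₂ + β * x₃ = 0)
    (h3 : 2 * α * x₃ + γ^3 - lam = 0)
    (h4 : γ^3 - 2 * δ * x₃ + 2 * lam = 0)
    (h5 : β * γ^2 + 4 * β * x₁ + 4 * δ * x₂ = 0) :
    γ = 0 := by
  by_contra hγ
  have hα : α = 0 := by rcases mul_eq_zero.mp hag with h | h; exact h; exact absurd h hγ
  have hx₃ : x₃ = 0 := by rcases mul_eq_zero.mp h1 with h | h; exact absurd h hγ; exact h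
  have : γ^3 = 0 := by subst hα hx₃; linarith
  exact hγ (pow_eq_zero_iff (by norm_num) |>.mp this)
end

section
/- Let α, β, γ be real numbers with β ≠ 0 and α ≠ 0 satisfying 8γ³ − α³ − 4αγ² − 8β²γ = 0 and α² + 4αγ + 4β² − 8γ² = 0. Then α = −2γ and β² = 3γ². -/
theorem stmt11 (α β γ : ℝ) (hβ : β ≠ 0) (hα : α ≠ 0)
    (h1 : 8 * γ^3 - α^3 - 4 * α * γ^2 - 8 * β^2 * γ = 0)
    (h2 : α^2 + 4 * α * γ + 4 * β^2 - 8 * γ^2 = 0) :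
    α = -2 * γ ∧ β^2 = 3 * γ^2 := by
  have key : (α - 2*γ)^2 * (α + 2*γ) = 0 := by linear_combination -h1 - 2*γ*h2
  have hαγ : α = -2 * γ := by
    rcases mul_eq_zero.mp key with h | h
    · have h' : α = 2*γ := by
        have := pow_eq_zero_iff (n := 2) (by norm_num) |>.mp h
        linarith
      exfalso
      apply hβ
      have : β^2 = 0 := by nlinarith
      exact pow_eq_zero_iff (n := 2) (by norm_num) |>.mp this
    · linarith
  exact ⟨hαγ, by nlinarith⟩
end

section
/- Let α, β, γ, λ be real numbers with β ≠ 0 satisfying α³ + 4αγ² + 8β²γ − 8γ³ − λ = 0, α² + 4αγ + 4β² − 8γ² = 0, and αλ = 0. Then either α = 0 (and then β² = 2γ² with λ = 8β²γ − 8γ³), or λ = 0 (and then α = −2γ and β² = 3γ²). -/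
theorem stmt19 (α β γ lam : ℝ) (hβ : β ≠ 0)
    (h1 : α^3 + 4 * α * γ^2 + 8 * β^2 * γ - 8 * γ^3 - lam = 0)
    (h2 : α^2 + 4 * α * γ + 4 * β^2 - 8 * γ^2 = 0)
    (h3 : α * lam = 0) :
    (α = 0 ∧ β^2 = 2 * γ^2 ∧ lam = 8 * β^2 * γ - 8 * γ^3) ∨
    (lam = 0 ∧ α = -2 * γ ∧ β^2 = 3 * γ^2) := by
  have hb : 0 < β^2 := by positivity
  rcases mul_eq_zero.mp h3 with hα | hlam
  · subst hα
    exact Or.inl ⟨rfl, by linarith, by linarith⟩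
  · subst hlam
    right
    have hfac : (α - 2*γ)^2 * (α + 2*γ) = 0 := by linear_combination h1 - 2*γ*h2
    rcases mul_eq_zero.mp hfac with h | h
    · exfalso
      have : α = 2*γ := by nlinarith [sq_nonneg (α - 2*γ)]
      nlinarith [sq_nonneg γ]
    · have hα : α = -2*γ := by linarith
      exact ⟨rfl, hα, by nlinarith⟩
end
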